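/- Let Ω be a finite abelian group of order d endowed with a nondegenerate symmetric bicharacter ⟨·,·⟩. Then there exist r, s ∈ Ω with ⟨r,s⟩ = −1 if and only if d is even. -/

import Mathlib

open scoped InnerProductSpace

noncomputable section

theorem bicharacter_negOne_iff_even
    {Ω : Type*} [Fintype Ω] [AddCommGroup Ω]
    (d : ℕ) (hcard : Fintype.card Ω = d)
    (β : Ω → Ω → ℂ)
    (hβnorm : ∀ x y, ‖β x y‖ = 1)
    (hβsymm : ∀ x y, β x y = β y x)
    (hβadd : ∀ x₁ x₂ y, β (x₁ + x₂) y = β x₁ y * β x₂ y)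
    (hβnondeg : ∀ x, (∀ y, β x y = 1) → x = 0) :
    (∃ r s : Ω, β r s = -1) ↔ Even d := by
  have hne : ∀ x y, β x y ≠ 0 := by
    intro x y h
    have := hβnorm x y
    rw [h] at this
    simp at this
  have hzero : ∀ y : Ω, β 0 y = 1 := by
    intro y
    have h := hβadd 0 0 y
    rw [add_zero] at h
    have := hne 0 y
    field_simp at h
    tauto
  have hsmul : ∀ (n : ℕ) (x y : Ω), β (n • x) y = (β x y) ^ n := by
    intro n x y
    induction n with
    | zero => simpa using hzero y
    | succ k ih => rw [succ_nsmul, hβadd, ih, pow_succ]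
  constructor
  · rintro ⟨r, s, hrs⟩
    have hd : (d : ℕ) • s = 0 := by
      rw [← hcard]
      exact card_nsmul_eq_zero
    have h1 : (β s r) ^ d = 1 := by
      rw [← hsmul, hd, hzero]
    rw [hβsymm s r, hrs] at h1
    by_contra hodd
    rw [Nat.not_even_iff_odd] at hodd
    rw [hodd.neg_one_pow] at h1
    norm_num at h1
  · intro hd
    have h2 : (2 : ℕ) ∣ Fintype.card Ω := by
      rw [hcard]; exact hd.two_dvd
    haveI : Fact (Nat.Prime 2) := ⟨Nat.prime_two⟩
    obtain ⟨r, hr⟩ := exists_prime_addOrderOf_dvd_card 2 h2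
    have hrne : r ≠ 0 := by
      intro h
      rw [h, addOrderOf_zero] at hr
      norm_num at hr
    have hrr : r + r = 0 := by
      have := addOrderOf_nsmul_eq_zero r
      rw [hr, two_nsmul] at this
      exact this
    obtain ⟨y, hy⟩ : ∃ y, β r y ≠ 1 := by
      by_contra h
      push_neg at h
      exact hrne (hβnondeg r h)
    have hsq : β r y * β r y = 1 := by
      rw [← hβadd, hrr, hzero]
    rcases mul_self_eq_one_iff.mp hsq with h1 | h1
    · exact absurd h1 hy
    · exact ⟨r, y, h1⟩
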